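/- arXiv:1606.06206 — 3 statements merged into one kernel-verified Lean document; each statement's English description precedes it below -/
import Mathlib

section
/- With the notation of the extension operator: setting Ṽ := Extend(U) = {Extend(φ) : φ ∈ U}, one has the direct sum decomposition V = W₁ ⊕ Ṽ ⊕ W₂, i.e. every element of V decomposes uniquely as a sum of elements of W₁, Ṽ, and W₂. -/
/-- With `Ṽ := Extend(U)` the range of the extension operator, one has the
direct sum decomposition `V = W₁ ⊕ Ṽ ⊕ W₂`: every element of `V` decomposes
uniquely as a sum of elements of `W₁`, `Ṽ` and `W₂`. -/
theorem stmt_4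
    {V : Type*} [NormedAddCommGroup V] [InnerProductSpace ℂ V] [FiniteDimensional ℂ V]
    (a : V →ₗ[ℂ] V →ₛₗ[starRingEnd ℂ] ℂ)
    (W₁ U W₂ : Submodule ℂ V)
    (hdirect : ∀ v : V, ∃! t : W₁ × U × W₂,
      v = (t.1 : V) + (t.2.1 : V) + (t.2.2 : V))
    (hnondeg : ∀ ψ ∈ W₁ ⊔ W₂, (∀ χ ∈ W₁ ⊔ W₂, a ψ χ = 0) → ψ = 0)
    (T : U →ₗ[ℂ] V)
    (hT : ∀ φ : U, (∃ ψ ∈ W₁ ⊔ W₂, T φ = (φ : V) + ψ) ∧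
      ∀ χ ∈ W₁ ⊔ W₂, a (T φ) χ = 0)
    (Vt : Submodule ℂ V) (hVt : Vt = LinearMap.range T) :
    ∀ v : V, ∃! t : W₁ × Vt × W₂,
      v = (t.1 : V) + (t.2.1 : V) + (t.2.2 : V) := by
  subst hVt
  -- W₁ ∩ W₂ = 0
  have hW12 : ∀ z : V, z ∈ W₁ → z ∈ W₂ → z = 0 := by
    intro z hz1 hz2
    obtain ⟨t, _, huniq⟩ := hdirect 0
    have h1 := huniq (⟨z, hz1⟩, 0, ⟨-z, W₂.neg_mem hz2⟩) (by simp)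
    have h2 := huniq (0, 0, 0) (by simp)
    have h3 := h1.trans h2.symm
    exact congrArg (fun t : W₁ × U × W₂ => (t.1 : V)) h3
  intro v
  obtain ⟨⟨w₁, u, w₂⟩, hv, huniq⟩ := hdirect v
  obtain ⟨⟨ψ, hψ, hTψ⟩, -⟩ := hT u
  obtain ⟨p₁, hp₁, p₂, hp₂, hps⟩ := Submodule.mem_sup.mp hψ
  refine ⟨(⟨(w₁ : V) - p₁, W₁.sub_mem w₁.2 hp₁⟩, ⟨T u, ⟨u, rfl⟩⟩,
      ⟨(w₂ : V) - p₂, W₂.sub_mem w₂.2 hp₂⟩), ?_, ?_⟩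
  · simp only [hTψ]
    rw [hv, ← hps]
    simp only
    abel
  · rintro ⟨q₁, ⟨x, ⟨φ, rfl⟩⟩, q₂⟩ heq
    obtain ⟨⟨ψ', hψ', hTψ'⟩, -⟩ := hT φ
    obtain ⟨r₁, hr₁, r₂, hr₂, hrs⟩ := Submodule.mem_sup.mp hψ'
    simp only at heq
    have hdec : v = (((⟨(q₁ : V) + r₁, W₁.add_mem q₁.2 hr₁⟩ : W₁) : V)) +
        ((φ : V)) + (((⟨(q₂ : V) + r₂, W₂.add_mem q₂.2 hr₂⟩ : W₂) : V)) := by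
      simp only
      rw [heq, hTψ', ← hrs]
      abel
    have h4 := huniq (⟨(q₁ : V) + r₁, _⟩, φ, ⟨(q₂ : V) + r₂, _⟩) hdec
    have hφu : φ = u := congrArg (fun t : W₁ × U × W₂ => t.2.1) h4
    subst hφu
    have hψeq : ψ' = ψ := by
      have h := hTψ.symm.trans hTψ'
      exact (add_left_cancel h).symm
    have hsum : r₁ + r₂ = p₁ + p₂ := by rw [hrs, hps, hψeq]
    have hr₁p₁ : r₁ = p₁ := by
      have hmem : r₁ - p₁ = 0 := hW12 _ (W₁.sub_mem hr₁ hp₁) (by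
        have hsub : r₁ - p₁ = p₂ - r₂ :=
          sub_eq_sub_iff_add_eq_add.mpr (hsum.trans (add_comm _ _))
        rw [hsub]; exact W₂.sub_mem hp₂ hr₂)
      exact sub_eq_zero.mp hmem
    have h1 : (q₁ : V) + r₁ = (w₁ : V) :=
      congrArg (fun t : W₁ × U × W₂ => (t.1 : V)) h4
    have h2 : (q₂ : V) + r₂ = (w₂ : V) :=
      congrArg (fun t : W₁ × U × W₂ => (t.2.2 : V)) h4
    refine Prod.ext ?_ (Prod.ext ?_ ?_)
    · apply Subtype.ext; simp only
      rw [← h1, hr₁p₁]; abel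
    · apply Subtype.ext; rfl
    · apply Subtype.ext; simp only
      have hr₂p₂ : r₂ = p₂ := by
        rw [hr₁p₁] at hsum
        exact add_left_cancel hsum
      rw [← h2, hr₂p₂]; abel
end

section
/- If a sesquilinear form a on a finite-dimensional Hilbert space V satisfies the inf-sup condition inf_{u≠0} sup_{v≠0} |a(u,v)|/(‖u‖‖v‖) = β > 0, then for every continuous antilinear functional f on V there exists a unique u ∈ V with a(u,v) = f(v) for all v ∈ V, and ‖u‖ ≤ ‖f‖/β. -/
open InnerProductSpace

noncomputable def stmt13aux.conjFun {V : Type*} [NormedAddCommGroup V] [InnerProductSpace ℂ V]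
    (a : V →ₗ[ℂ] V →ₛₗ[starRingEnd ℂ] ℂ) (u : V) : V →ₗ[ℂ] ℂ where
  toFun v := starRingEnd ℂ (a u v)
  map_add' v w := by simp
  map_smul' c v := by simp [mul_comm]

noncomputable def stmt13aux.T {V : Type*} [NormedAddCommGroup V] [InnerProductSpace ℂ V]
    [FiniteDimensional ℂ V] (a : V →ₗ[ℂ] V →ₛₗ[starRingEnd ℂ] ℂ) : V →ₗ[ℂ] V where
  toFun u := (InnerProductSpace.toDual ℂ V).symm
      (LinearMap.toContinuousLinearMap (stmt13aux.conjFun a u))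
  map_add' u w := by
    have : stmt13aux.conjFun a (u + w) = stmt13aux.conjFun a u + stmt13aux.conjFun a w := by
      ext v; simp [stmt13aux.conjFun]
    simp [this]
  map_smul' c u := by
    have : stmt13aux.conjFun a (c • u) =
        (starRingEnd ℂ c) • stmt13aux.conjFun a u := by
      ext v; simp [stmt13aux.conjFun, mul_comm]
    show (InnerProductSpace.toDual ℂ V).symm (LinearMap.toContinuousLinearMap (stmt13aux.conjFun a (c • u))) = c • (InnerProductSpace.toDual ℂ V).symm (LinearMap.toContinuousLinearMap (stmt13aux.conjFun a u))
    rw [this, map_smulₛₗ, LinearIsometryEquiv.map_smulₛₗ]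
    simp

lemma stmt13aux.inner_T {V : Type*} [NormedAddCommGroup V] [InnerProductSpace ℂ V]
    [FiniteDimensional ℂ V] (a : V →ₗ[ℂ] V →ₛₗ[starRingEnd ℂ] ℂ) (u v : V) :
    (inner ℂ (stmt13aux.T a u) v : ℂ) = starRingEnd ℂ (a u v) := by
  simp [stmt13aux.T, InnerProductSpace.toDual_symm_apply, stmt13aux.conjFun]

lemma stmt13aux.a_eq {V : Type*} [NormedAddCommGroup V] [InnerProductSpace ℂ V]
    [FiniteDimensional ℂ V] (a : V →ₗ[ℂ] V →ₛₗ[starRingEnd ℂ] ℂ) (u v : V) :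
    a u v = (inner ℂ v (stmt13aux.T a u) : ℂ) := by
  rw [← inner_conj_symm, stmt13aux.inner_T]
  simp

/-- If a sesquilinear form on a finite-dimensional complex Hilbert space
satisfies the inf-sup condition with constant `β > 0`, then for every
continuous antilinear functional `f` there is a unique `u` with
`a(u,v) = f(v)` for all `v`, and it satisfies `‖u‖ ≤ ‖f‖/β`. -/
theorem stmt_13
    {V : Type*} [NormedAddCommGroup V] [InnerProductSpace ℂ V] [FiniteDimensional ℂ V]
    (a : V →ₗ[ℂ] V →ₛₗ[starRingEnd ℂ] ℂ)
    (β : ℝ) (hβ : 0 < β)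
    (hinfsup : ∀ u : V, u ≠ 0 →
      β ≤ ⨆ v : {v : V // v ≠ 0}, ‖a u (v : V)‖ / (‖u‖ * ‖(v : V)‖)) :
    ∀ f : V →SL[starRingEnd ℂ] ℂ,
      (∃! u : V, ∀ v : V, a u v = f v) ∧
      (∀ u : V, (∀ v : V, a u v = f v) → ‖u‖ ≤ ‖f‖ / β) := by
  intro f
  -- injectivity of T
  have hTinj : Function.Injective (stmt13aux.T a) := by
    rw [injective_iff_map_eq_zero]
    intro u hu
    by_contra hne
    have hzero : ∀ v : V, a u v = 0 := by
      intro v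
      rw [stmt13aux.a_eq, hu, inner_zero_right]
    have : Nonempty {v : V // v ≠ 0} := ⟨⟨u, hne⟩⟩
    have hle := hinfsup u hne
    have : (⨆ v : {v : V // v ≠ 0}, ‖a u (v : V)‖ / (‖u‖ * ‖(v : V)‖)) = 0 := by
      have : ∀ v : {v : V // v ≠ 0}, ‖a u (v : V)‖ / (‖u‖ * ‖(v : V)‖) = 0 := by
        intro v; simp [hzero]
      simp only [this]
      exact ciSup_const
    linarith
  have hTsurj : Function.Surjective (stmt13aux.T a) :=
    (LinearMap.injective_iff_surjective).mp hTinj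
  constructor
  · -- existence and uniqueness
    have hmul : ∀ (c : ℂ) (v : V), starRingEnd ℂ (f (c • v)) = c * starRingEnd ℂ (f v) := by
      intro c v; rw [map_smulₛₗ]; simp [mul_comm]
    let gl : V →ₗ[ℂ] ℂ :=
      { toFun := fun v => starRingEnd ℂ (f v)
        map_add' := by intro v w; simp
        map_smul' := by intro c v; simpa using hmul c v }
    set w := (InnerProductSpace.toDual ℂ V).symm (LinearMap.toContinuousLinearMap gl) with hwdef
    have hw : ∀ v : V, (inner ℂ w v : ℂ) = starRingEnd ℂ (f v) := by
      intro v
      rw [hwdef, InnerProductSpace.toDual_symm_apply]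
      simp [gl]
    obtain ⟨u, hu⟩ := hTsurj w
    refine ⟨u, ?_, ?_⟩
    · intro v
      rw [stmt13aux.a_eq, hu, ← inner_conj_symm, hw v]
      simp
    · intro u' hu'
      apply hTinj
      rw [hu]
      apply ext_inner_left ℂ
      intro v
      rw [← stmt13aux.a_eq, hu' v, ← inner_conj_symm, hw v]
      simp
  · -- norm bound
    intro u hu
    rcases eq_or_ne u 0 with rfl | hne
    · simpa using div_nonneg (norm_nonneg f) hβ.le
    · have hun : 0 < ‖u‖ := norm_pos_iff.mpr hne
      have : Nonempty {v : V // v ≠ 0} := ⟨⟨u, hne⟩⟩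
      have hle := hinfsup u hne
      have hbound : (⨆ v : {v : V // v ≠ 0}, ‖a u (v : V)‖ / (‖u‖ * ‖(v : V)‖)) ≤ ‖f‖ / ‖u‖ := by
        apply ciSup_le
        rintro ⟨v, hv⟩
        have hvn : 0 < ‖v‖ := norm_pos_iff.mpr hv
        rw [hu v, div_le_div_iff₀ (by positivity) hun]
        have := f.le_opNorm v
        nlinarith [norm_nonneg (f v)]
      have hβu : β ≤ ‖f‖ / ‖u‖ := le_trans hle hbound
      rw [le_div_iff₀ hβ]
      rw [le_div_iff₀ hun] at hβu
      linarith
end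

section
/- Low-frequency degeneration of the inf-sup constant: with a(u,v;ω) = b(u,v) − ω² m(u,v) + iω r(u,v) and norm ‖u‖_V² = b(u,u) + ω_max² m(u,u) + ω_max r(u,u), if there exists a nonzero u₀ ∈ V with b(u₀,u₀) = 0 (equivalently u₀ in the kernel of b, e.g. a gradient field in H(curl)), then the inf-sup constant β(ω) := inf_{u≠0} sup_{v≠0} |a(u,v;ω)|/(‖u‖_V‖v‖_V) satisfies β(ω) → β(0) ≤ sup_{v≠0} |a(u₀,v;0)|/(‖u₀‖_V‖v‖_V) as ω → 0, and if additionally b(u₀,v) = 0 for all v ∈ V then lim_{ω→0} β(ω) = 0. -/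
private lemma cs_aux {V : Type*} [NormedAddCommGroup V] [InnerProductSpace ℂ V]
    (f : V →ₗ[ℂ] V →ₛₗ[starRingEnd ℂ] ℂ)
    (hherm : ∀ u v : V, f u v = starRingEnd ℂ (f v u))
    (hpos : ∀ u : V, 0 ≤ (f u u).re) (u v : V) :
    ‖f u v‖ ^ 2 ≤ (f u u).re * (f v v).re := by
  let c : PreInnerProductSpace.Core ℂ V :=
    { inner := fun x y => f y x
      conj_inner_symm := fun x y => (hherm y x).symm
      re_inner_nonneg := fun x => hpos x
      add_left := fun x y z => map_add (f z) x y
      smul_left := fun x y t => by simp }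
  have h : ‖f u v‖ * ‖f v u‖ ≤ (f v v).re * (f u u).re :=
    @InnerProductSpace.Core.inner_mul_inner_self_le ℂ V _ _ _ c v u
  have he : ‖f v u‖ = ‖f u v‖ := by rw [hherm v u]; simp
  rw [he] at h
  nlinarith [h]

/-- Cauchy–Schwarz with a scaling constant. -/
private lemma form_le {V : Type*} [NormedAddCommGroup V] [InnerProductSpace ℂ V]
    (f : V →ₗ[ℂ] V →ₛₗ[starRingEnd ℂ] ℂ)
    (hherm : ∀ u v : V, f u v = starRingEnd ℂ (f v u))
    (hpos : ∀ u : V, 0 ≤ (f u u).re)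
    (C : ℝ) (hC : 0 ≤ C)
    (hbound : ∀ u : V, C * (f u u).re ≤ ‖u‖ ^ 2) (u v : V) :
    C * ‖f u v‖ ≤ ‖u‖ * ‖v‖ := by
  have h1 := cs_aux f hherm hpos u v
  have h2 := hbound u
  have h3 := hbound v
  have h4 := hpos u
  have h5 := hpos v
  have hsq : (C * ‖f u v‖) ^ 2 ≤ (‖u‖ * ‖v‖) ^ 2 := by
    have e1 : (C * (f u u).re) * (C * (f v v).re) ≤ ‖u‖ ^ 2 * ‖v‖ ^ 2 :=
      mul_le_mul h2 h3 (mul_nonneg hC h5) (by positivity)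
    have e2 : C ^ 2 * ‖f u v‖ ^ 2 ≤ C ^ 2 * ((f u u).re * (f v v).re) :=
      mul_le_mul_of_nonneg_left h1 (sq_nonneg C)
    nlinarith [e1, e2]
  have h0 : 0 ≤ C * ‖f u v‖ := mul_nonneg hC (norm_nonneg _)
  nlinarith [hsq, h0, mul_nonneg (norm_nonneg u) (norm_nonneg v)]

private noncomputable def Dfun (ωmax ω : ℝ) : ℝ := ω ^ 2 / ωmax ^ 2 + |ω| / ωmax

private noncomputable def Gfun {V : Type*} [NormedAddCommGroup V] [InnerProductSpace ℂ V]
    (b m r : V →ₗ[ℂ] V →ₛₗ[starRingEnd ℂ] ℂ) (ω : ℝ) (u : V) : ℝ :=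
  ⨆ v : {v : V // v ≠ 0},
    ‖b u (v : V) - (ω : ℂ) ^ 2 * m u (v : V)
        + Complex.I * (ω : ℂ) * r u (v : V)‖ / (‖u‖ * ‖(v : V)‖)

/-- Low-frequency degeneration of the inf-sup constant: for
`a(u,v;ω) = b(u,v) - ω² m(u,v) + iω r(u,v)` with the energy norm
`‖u‖² = b(u,u) + ω_max² m(u,u) + ω_max r(u,u)`, if there is a nonzero `u₀`
with `b(u₀,u₀) = 0`, then as `ω → 0` the inf-sup constant `β(ω)` tends to
`β(0) ≤ sup_{v ≠ 0} |a(u₀,v;0)|/(‖u₀‖‖v‖)`, and if moreover `b(u₀,v) = 0`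
for all `v`, then `β(ω) → 0`. -/
theorem stmt_15
    {V : Type*} [NormedAddCommGroup V] [InnerProductSpace ℂ V] [FiniteDimensional ℂ V]
    (b m r : V →ₗ[ℂ] V →ₛₗ[starRingEnd ℂ] ℂ)
    (hbherm : ∀ u v : V, b u v = starRingEnd ℂ (b v u))
    (hmherm : ∀ u v : V, m u v = starRingEnd ℂ (m v u))
    (hrherm : ∀ u v : V, r u v = starRingEnd ℂ (r v u))
    (hbpos : ∀ u : V, 0 ≤ (b u u).re)
    (hmpos : ∀ u : V, 0 ≤ (m u u).re)
    (hrpos : ∀ u : V, 0 ≤ (r u u).re)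
    (ωmax : ℝ) (hωmax : 0 < ωmax)
    (hnorm : ∀ u : V, ((‖u‖ ^ 2 : ℝ) : ℂ) =
      b u u + (ωmax : ℂ) ^ 2 * m u u + (ωmax : ℂ) * r u u)
    (u₀ : V) (hu₀ : u₀ ≠ 0) (hbu₀ : b u₀ u₀ = 0)
    (β : ℝ → ℝ)
    (hβ : ∀ ω : ℝ, β ω =
      ⨅ u : {u : V // u ≠ 0}, ⨆ v : {v : V // v ≠ 0},
        ‖b (u : V) (v : V) - (ω : ℂ) ^ 2 * m (u : V) (v : V)
            + Complex.I * (ω : ℂ) * r (u : V) (v : V)‖ /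
          (‖(u : V)‖ * ‖(v : V)‖)) :
    Filter.Tendsto β (nhdsWithin 0 (Set.Ioi 0)) (nhds (β 0)) ∧
    β 0 ≤ (⨆ v : {v : V // v ≠ 0}, ‖b u₀ (v : V)‖ / (‖u₀‖ * ‖(v : V)‖)) ∧
    ((∀ v : V, b u₀ v = 0) →
      Filter.Tendsto β (nhdsWithin 0 (Set.Ioi 0)) (nhds 0)) := by
  haveI : Nonempty {u : V // u ≠ 0} := ⟨⟨u₀, hu₀⟩⟩
  -- β in terms of Gfun
  have hβG : ∀ ω : ℝ, β ω = ⨅ u : {u : V // u ≠ 0}, Gfun b m r ω (u : V) := by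
    intro ω; rw [hβ ω]; rfl
  -- real form of the norm identity
  have hre : ∀ u : V, (b u u).re + ωmax ^ 2 * (m u u).re + ωmax * (r u u).re = ‖u‖ ^ 2 := by
    intro u
    have h := congrArg Complex.re (hnorm u)
    simp only [← Complex.ofReal_pow, Complex.ofReal_re, Complex.add_re, Complex.mul_re,
      Complex.ofReal_im, zero_mul, sub_zero] at h
    linarith [h]
  -- Cauchy–Schwarz style bounds
  have hb1 : ∀ u v : V, ‖b u v‖ ≤ ‖u‖ * ‖v‖ := by
    intro u v
    have := form_le b hbherm hbpos 1 zero_le_one (fun u => by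
      nlinarith [hre u, hmpos u, hrpos u, sq_nonneg ωmax, hωmax,
        mul_nonneg (sq_nonneg ωmax) (hmpos u), mul_nonneg hωmax.le (hrpos u)]) u v
    linarith [this]
  have hm1 : ∀ u v : V, ωmax ^ 2 * ‖m u v‖ ≤ ‖u‖ * ‖v‖ := by
    intro u v
    exact form_le m hmherm hmpos (ωmax ^ 2) (sq_nonneg ωmax) (fun u => by
      nlinarith [hre u, hbpos u, mul_nonneg hωmax.le (hrpos u)]) u v
  have hr1 : ∀ u v : V, ωmax * ‖r u v‖ ≤ ‖u‖ * ‖v‖ := by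
    intro u v
    exact form_le r hrherm hrpos ωmax hωmax.le (fun u => by
      nlinarith [hre u, hbpos u, mul_nonneg (sq_nonneg ωmax) (hmpos u)]) u v
  -- the modulus of continuity
  have hDdef : ∀ ω : ℝ, Dfun ωmax ω = ω ^ 2 / ωmax ^ 2 + |ω| / ωmax := fun ω => rfl
  have hDnonneg : ∀ ω : ℝ, 0 ≤ Dfun ωmax ω := by
    intro ω; rw [hDdef]; positivity
  -- per-term comparison
  have hterm : ∀ (ω : ℝ) (u v : V), u ≠ 0 → v ≠ 0 →
      |‖b u v - (ω : ℂ) ^ 2 * m u v + Complex.I * (ω : ℂ) * r u v‖ / (‖u‖ * ‖v‖)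
        - ‖b u v‖ / (‖u‖ * ‖v‖)| ≤ Dfun ωmax ω := by
    intro ω u v hu hv
    have hd : 0 < ‖u‖ * ‖v‖ :=
      mul_pos (norm_pos_iff.mpr hu) (norm_pos_iff.mpr hv)
    set A : ℂ := b u v - (ω : ℂ) ^ 2 * m u v + Complex.I * (ω : ℂ) * r u v with hA
    have hdiff : |‖A‖ - ‖b u v‖| ≤ ω ^ 2 * ‖m u v‖ + |ω| * ‖r u v‖ := by
      have h1 : |‖A‖ - ‖b u v‖| ≤ ‖A - b u v‖ := abs_norm_sub_norm_le _ _
      have h2 : A - b u v = -((ω : ℂ) ^ 2 * m u v) + Complex.I * (ω : ℂ) * r u v := by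
        rw [hA]; ring
      have h3 : ‖A - b u v‖ ≤ ω ^ 2 * ‖m u v‖ + |ω| * ‖r u v‖ := by
        rw [h2]
        refine le_trans (norm_add_le _ _) ?_
        have e1 : ‖-((ω : ℂ) ^ 2 * m u v)‖ = ω ^ 2 * ‖m u v‖ := by
          rw [norm_neg, norm_mul]
          congr 1
          rw [norm_pow, Complex.norm_real]
          exact sq_abs ω
        have e2 : ‖Complex.I * (ω : ℂ) * r u v‖ = |ω| * ‖r u v‖ := by
          rw [norm_mul, norm_mul, Complex.norm_I, one_mul, Complex.norm_real,
            Real.norm_eq_abs]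
        rw [e1, e2]
      linarith
    rw [div_sub_div_same, abs_div, abs_of_pos hd, div_le_iff₀ hd]
    have e1 : ω ^ 2 * ‖m u v‖ ≤ ω ^ 2 / ωmax ^ 2 * (‖u‖ * ‖v‖) := by
      rw [div_mul_eq_mul_div, le_div_iff₀ (by positivity)]
      calc ω ^ 2 * ‖m u v‖ * ωmax ^ 2 = ω ^ 2 * (ωmax ^ 2 * ‖m u v‖) := by ring
        _ ≤ ω ^ 2 * (‖u‖ * ‖v‖) := mul_le_mul_of_nonneg_left (hm1 u v) (sq_nonneg ω)
    have e2 : |ω| * ‖r u v‖ ≤ |ω| / ωmax * (‖u‖ * ‖v‖) := by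
      rw [div_mul_eq_mul_div, le_div_iff₀ hωmax]
      calc |ω| * ‖r u v‖ * ωmax = |ω| * (ωmax * ‖r u v‖) := by ring
        _ ≤ |ω| * (‖u‖ * ‖v‖) := mul_le_mul_of_nonneg_left (hr1 u v) (abs_nonneg ω)
    have : Dfun ωmax ω * (‖u‖ * ‖v‖) = ω ^ 2 / ωmax ^ 2 * (‖u‖ * ‖v‖) + |ω| / ωmax * (‖u‖ * ‖v‖) := by
      rw [hDdef]; ring
    linarith
  -- boundedness of the families of quotients
  have hbdd0 : ∀ u : V, BddAbove (Set.range fun v : {v : V // v ≠ 0} =>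
      ‖b u (v : V)‖ / (‖u‖ * ‖(v : V)‖)) := by
    intro u
    refine ⟨1, ?_⟩
    rintro x ⟨v, rfl⟩
    rcases eq_or_ne u 0 with h | h
    · simp [h]
    · exact div_le_one_of_le₀ (hb1 u v)
        (mul_nonneg (norm_nonneg _) (norm_nonneg _))
  have hbddω : ∀ (ω : ℝ) (u : V), BddAbove (Set.range fun v : {v : V // v ≠ 0} =>
      ‖b u (v : V) - (ω : ℂ) ^ 2 * m u (v : V)
          + Complex.I * (ω : ℂ) * r u (v : V)‖ / (‖u‖ * ‖(v : V)‖)) := by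
    intro ω u
    refine ⟨1 + Dfun ωmax ω, ?_⟩
    rintro x ⟨v, rfl⟩
    rcases eq_or_ne u 0 with h | h
    · simp [h]
      linarith [hDnonneg ω]
    · have h1 := hterm ω u v h v.2
      have h2 : ‖b u (v : V)‖ / (‖u‖ * ‖(v : V)‖) ≤ 1 :=
        div_le_one_of_le₀ (hb1 u v) (mul_nonneg (norm_nonneg _) (norm_nonneg _))
      rw [abs_le] at h1
      linarith [h1.2]
  -- values of Gfun at 0
  have hG0 : ∀ u : V, Gfun b m r 0 u =
      ⨆ v : {v : V // v ≠ 0}, ‖b u (v : V)‖ / (‖u‖ * ‖(v : V)‖) := by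
    intro u
    unfold Gfun
    exact iSup_congr fun v => by push_cast; norm_num
  have hGnonneg : ∀ (ω : ℝ) (u : V), 0 ≤ Gfun b m r ω u := by
    intro ω u
    have h := le_ciSup (hbddω ω u) (⟨u₀, hu₀⟩ : {v : V // v ≠ 0})
    exact le_trans (by positivity) h
  -- comparison at the sup level
  have hGdiff : ∀ (ω : ℝ) (u : V), u ≠ 0 →
      |Gfun b m r ω u - Gfun b m r 0 u| ≤ Dfun ωmax ω := by
    intro ω u hu
    rw [hG0 u, abs_le]
    constructor
    · rw [neg_le, neg_sub]
      have : (⨆ v : {v : V // v ≠ 0}, ‖b u (v : V)‖ / (‖u‖ * ‖(v : V)‖)) ≤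
          Gfun b m r ω u + Dfun ωmax ω := by
        refine ciSup_le fun v => ?_
        have h1 := hterm ω u v hu v.2
        rw [abs_le] at h1
        have h2 := le_ciSup (hbddω ω u) v
        unfold Gfun
        linarith [h1.1, h2]
      linarith
    · have : Gfun b m r ω u ≤
          (⨆ v : {v : V // v ≠ 0}, ‖b u (v : V)‖ / (‖u‖ * ‖(v : V)‖)) + Dfun ωmax ω := by
        unfold Gfun
        refine ciSup_le fun v => ?_
        have h1 := hterm ω u v hu v.2
        rw [abs_le] at h1
        have h2 := le_ciSup (hbdd0 u) v
        linarith [h1.2, h2]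
      linarith
  -- boundedness below at the inf level
  have hbddB : ∀ ω : ℝ, BddBelow (Set.range fun u : {u : V // u ≠ 0} =>
      Gfun b m r ω (u : V)) := by
    intro ω
    refine ⟨0, ?_⟩
    rintro x ⟨u, rfl⟩
    exact hGnonneg ω u
  -- comparison at the inf level
  have hβdiff : ∀ ω : ℝ, |β ω - β 0| ≤ Dfun ωmax ω := by
    intro ω
    rw [hβG ω, hβG 0, abs_le]
    constructor
    · rw [neg_le, neg_sub]
      have : (⨅ u : {u : V // u ≠ 0}, Gfun b m r 0 (u : V)) ≤
          (⨅ u : {u : V // u ≠ 0}, Gfun b m r ω (u : V)) + Dfun ωmax ω := by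
        rw [← sub_le_iff_le_add]
        refine le_ciInf fun u => ?_
        have h1 := ciInf_le (hbddB 0) u
        have h2 := hGdiff ω u u.2
        rw [abs_le] at h2
        linarith [h1, h2.1]
      linarith
    · have : (⨅ u : {u : V // u ≠ 0}, Gfun b m r ω (u : V)) ≤
          (⨅ u : {u : V // u ≠ 0}, Gfun b m r 0 (u : V)) + Dfun ωmax ω := by
        rw [← sub_le_iff_le_add]
        refine le_ciInf fun u => ?_
        have h1 := ciInf_le (hbddB ω) u
        have h2 := hGdiff ω u u.2
        rw [abs_le] at h2
        linarith [h1, h2.2]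
      linarith
  -- D tends to 0
  have hDt : Filter.Tendsto (Dfun ωmax) (nhdsWithin 0 (Set.Ioi 0)) (nhds 0) := by
    have hc : Continuous (Dfun ωmax) := by
      unfold Dfun
      fun_prop
    have h0 : Filter.Tendsto (Dfun ωmax) (nhdsWithin 0 (Set.Ioi 0)) (nhds (Dfun ωmax 0)) :=
      (hc.tendsto 0).mono_left nhdsWithin_le_nhds
    simpa [Dfun] using h0
  -- part 1
  have part1 : Filter.Tendsto β (nhdsWithin 0 (Set.Ioi 0)) (nhds (β 0)) := by
    have h1 : Filter.Tendsto (fun ω => β 0 - Dfun ωmax ω) (nhdsWithin 0 (Set.Ioi 0))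
        (nhds (β 0)) := by
      have := Filter.Tendsto.sub (tendsto_const_nhds (x := β 0)) hDt
      simpa using this
    have h2 : Filter.Tendsto (fun ω => β 0 + Dfun ωmax ω) (nhdsWithin 0 (Set.Ioi 0))
        (nhds (β 0)) := by
      have := Filter.Tendsto.add (tendsto_const_nhds (x := β 0)) hDt
      simpa using this
    refine tendsto_of_tendsto_of_tendsto_of_le_of_le h1 h2 ?_ ?_
    · intro ω
      show β 0 - Dfun ωmax ω ≤ β ω
      have := hβdiff ω; rw [abs_le] at this; linarith [this.1]
    · intro ω
      show β ω ≤ β 0 + Dfun ωmax ω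
      have := hβdiff ω; rw [abs_le] at this; linarith [this.2]
  -- part 2
  have part2 : β 0 ≤ ⨆ v : {v : V // v ≠ 0}, ‖b u₀ (v : V)‖ / (‖u₀‖ * ‖(v : V)‖) := by
    rw [hβG 0, ← hG0 u₀]
    exact ciInf_le (hbddB 0) ⟨u₀, hu₀⟩
  refine ⟨part1, part2, fun hall => ?_⟩
  -- part 3
  have hβ0 : β 0 = 0 := by
    have hle : β 0 ≤ 0 := by
      refine le_trans part2 ?_
      have : ∀ v : {v : V // v ≠ 0}, ‖b u₀ (v : V)‖ / (‖u₀‖ * ‖(v : V)‖) = 0 := by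
        intro v; rw [hall v]; simp
      have heq : (⨆ v : {v : V // v ≠ 0}, ‖b u₀ (v : V)‖ / (‖u₀‖ * ‖(v : V)‖))
          = ⨆ _ : {v : V // v ≠ 0}, (0 : ℝ) := iSup_congr this
      rw [heq, ciSup_const]
    have hge : 0 ≤ β 0 := by
      rw [hβG 0]
      exact le_ciInf fun u => hGnonneg 0 u
    linarith
  rwa [hβ0] at part1
end
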